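/- For any real α > ⌊d/2⌋ - 1/2 and any 0 ≤ i ≤ ⌊d/2⌋ - 1, the polynomial M_i(n) = Π_{j=0}^{d-2i-1}(n + 1/2 + i + j) + Π_{j=0}^{d-2i-1}(n − 1/2 − i − j) satisfies M_i(α) > 0. -/

import Mathlib

lemma aux_prod_lt {ι : Type*} {s : Finset ι} (hs : s.Nonempty) (f g : ι → ℝ)
    (h0 : ∀ j ∈ s, 0 ≤ f j) (h : ∀ j ∈ s, f j < g j) :
    ∏ j ∈ s, f j < ∏ j ∈ s, g j := by
  by_cases hz : ∃ j ∈ s, f j = 0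
  · obtain ⟨j, hj, hfj⟩ := hz
    have : ∏ j ∈ s, f j = 0 := Finset.prod_eq_zero hj hfj
    rw [this]
    exact Finset.prod_pos fun k hk => lt_of_le_of_lt (h0 k hk) (h k hk)
  · push_neg at hz
    exact Finset.prod_lt_prod_of_nonempty
      (fun k hk => lt_of_le_of_ne (h0 k hk) (Ne.symm (hz k hk))) h hs

theorem stmt3 (d : ℕ) (hd : 0 < d) (i : ℕ) (hi : i + 1 ≤ d / 2)
    (α : ℝ) (hα : ((d / 2 : ℕ) : ℝ) - 1 / 2 < α) :
    0 < (∏ j ∈ Finset.range (d - 2 * i), (α + 1 / 2 + (i : ℝ) + (j : ℝ))) +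
          ∏ j ∈ Finset.range (d - 2 * i), (α - 1 / 2 - (i : ℝ) - (j : ℝ)) := by
  have hd2 : (1 : ℕ) ≤ d / 2 := le_trans (Nat.le_add_left 1 i) hi
  have hα0 : (0 : ℝ) < α := by
    have : (1 : ℝ) ≤ ((d / 2 : ℕ) : ℝ) := by exact_mod_cast hd2
    linarith
  have hne : (Finset.range (d - 2 * i)).Nonempty := by
    rw [Finset.nonempty_range_iff]
    omega
  have key : ∏ j ∈ Finset.range (d - 2 * i), |α - 1 / 2 - (i : ℝ) - (j : ℝ)|
      < ∏ j ∈ Finset.range (d - 2 * i), (α + 1 / 2 + (i : ℝ) + (j : ℝ)) := by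
    apply aux_prod_lt hne _ _ (fun j _ => abs_nonneg _)
    intro j _
    have hj : (0 : ℝ) ≤ (j : ℝ) := Nat.cast_nonneg j
    have hi' : (0 : ℝ) ≤ (i : ℝ) := Nat.cast_nonneg i
    rw [abs_lt]
    constructor <;> linarith
  have h2 : -∏ j ∈ Finset.range (d - 2 * i), (α - 1 / 2 - (i : ℝ) - (j : ℝ))
      ≤ ∏ j ∈ Finset.range (d - 2 * i), |α - 1 / 2 - (i : ℝ) - (j : ℝ)| := by
    rw [← Finset.abs_prod]
    exact neg_le_abs _
  linarith
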